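/- Let Δ be a probability distribution over a finite set of committees and, for voter v, let rank_v(S) = Pr_{S'~Δ}[S ⪰_v S'] where ⪰_v is a linear order over committees. Suppose for each committee S, U_S is the set of the αn voters with smallest rank_v(S). If g : [0,1] → ℝ_{≥0} is non-decreasing, non-constant, and continuous, then E_{S~Δ}[(1/n)·Σ_{v∈U_S} g(rank_v(S))] ≥ ∫_0^α g(x) dx. -/

import Mathlib

open Finset MeasureTheory intervalIntegral

/-- The rank of committee `S` for voter `v`: the total `Δ`-probability of committees `S'`
weakly below `S` in `v`'s linear order (i.e., such that `v` does not strictly prefer `S'`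
to `S`). -/
noncomputable def committeeRank {V 𝒮 : Type*} [Fintype 𝒮]
    (Δ : 𝒮 → ℝ) (pref : V → 𝒮 → 𝒮 → Prop) [∀ v, DecidableRel (pref v)]
    (v : V) (S : 𝒮) : ℝ :=
  ∑ S' ∈ Finset.univ.filter (fun S' => ¬ pref v S' S), Δ S'

/-- Every nonempty finite set has a maximum with respect to a strict total order. -/
lemma exists_top_aux {𝒮 : Type*} {r : 𝒮 → 𝒮 → Prop} (h : IsStrictTotalOrder 𝒮 r) :
    ∀ (A : Finset 𝒮), A.Nonempty → ∃ m ∈ A, ∀ x ∈ A, ¬ r x m := by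
  classical
  intro A
  induction A using Finset.induction_on with
  | empty => intro hA; exact absurd hA (by simp)
  | @insert b s hb ih =>
    intro _
    rcases s.eq_empty_or_nonempty with rfl | hs
    · refine ⟨b, by simp, ?_⟩
      intro x hx
      simp only [Finset.mem_insert, Finset.notMem_empty, or_false] at hx
      subst hx
      exact h.irrefl x
    · obtain ⟨m, hm, hmax⟩ := ih hs
      rcases (haveI := h; trichotomous_of (r := r) b m) with hbm | rfl | hmb
      · refine ⟨b, Finset.mem_insert_self b s, ?_⟩
        intro x hx
        rcases Finset.mem_insert.mp hx with rfl | hx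
        · exact h.irrefl x
        · intro hxb
          exact hmax x hx (h.trans x b m hxb hbm)
      · refine ⟨b, Finset.mem_insert_of_mem hm, ?_⟩
        intro x hx
        rcases Finset.mem_insert.mp hx with rfl | hx
        · exact h.irrefl x
        · exact hmax x hx
      · refine ⟨m, Finset.mem_insert_of_mem hm, ?_⟩
        intro x hx
        rcases Finset.mem_insert.mp hx with rfl | hx
        · intro hxm
          exact h.irrefl m (h.trans m x m hmb hxm)
        · exact hmax x hx

/-- The rank always lies in `[0, 1]`. -/
lemma rank_mem_Icc {V 𝒮 : Type*} [Fintype 𝒮]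
    (Δ : 𝒮 → ℝ) (hΔ0 : ∀ S, 0 ≤ Δ S) (hΔ1 : (∑ S : 𝒮, Δ S) = 1)
    (pref : V → 𝒮 → 𝒮 → Prop) [∀ v, DecidableRel (pref v)]
    (v : V) (S : 𝒮) : committeeRank Δ pref v S ∈ Set.Icc (0 : ℝ) 1 := by
  constructor
  · exact Finset.sum_nonneg fun i _ => hΔ0 i
  · calc committeeRank Δ pref v S ≤ ∑ S' : 𝒮, Δ S' :=
        Finset.sum_le_sum_of_subset_of_nonneg (Finset.filter_subset _ _)
          (fun i _ _ => hΔ0 i)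
    _ = 1 := hΔ1

/-- Per-voter CDF bound: the `Δ`-mass of committees with rank at most `t` is at most `t`. -/
lemma sum_rank_le {V 𝒮 : Type*} [Fintype 𝒮]
    (Δ : 𝒮 → ℝ) (hΔ0 : ∀ S, 0 ≤ Δ S)
    (pref : V → 𝒮 → 𝒮 → Prop) [∀ v, DecidableRel (pref v)]
    (hlin : ∀ v, IsStrictTotalOrder 𝒮 (pref v)) (v : V) (t : ℝ) (ht : 0 ≤ t) :
    ∑ S ∈ Finset.univ.filter (fun S => committeeRank Δ pref v S ≤ t), Δ S ≤ t := by
  classical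
  set A := Finset.univ.filter (fun S => committeeRank Δ pref v S ≤ t) with hA
  rcases A.eq_empty_or_nonempty with h | h
  · simp [h, ht]
  · obtain ⟨m, hm, hmax⟩ := exists_top_aux (hlin v) A h
    have hsub : A ⊆ Finset.univ.filter (fun S' => ¬ pref v S' m) := by
      intro x hx
      simp only [Finset.mem_filter, Finset.mem_univ, true_and]
      exact hmax x hx
    calc ∑ S ∈ A, Δ S ≤ ∑ S' ∈ Finset.univ.filter (fun S' => ¬ pref v S' m), Δ S' :=
        Finset.sum_le_sum_of_subset_of_nonneg hsub (fun i _ _ => hΔ0 i)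
    _ = committeeRank Δ pref v m := rfl
    _ ≤ t := by
        have := Finset.mem_filter.mp (hA ▸ hm)
        exact this.2

/-- Key abstract lemma: weighted sums of a monotone function dominate the corresponding
integral, given the cumulative-weight bound. -/
lemma key_lemma (g : ℝ → ℝ) (hmono : MonotoneOn g (Set.Icc 0 1))
    (hcont : ContinuousOn g (Set.Icc 0 1)) (n : ℝ) (hn : 0 < n) :
    ∀ (T : Finset ℝ) (w : ℝ → ℝ),
      (∀ r ∈ T, r ∈ Set.Icc (0 : ℝ) 1) → (∀ r ∈ T, 0 ≤ w r) →
      (∀ t ∈ T, ∑ r ∈ T.filter (· ≤ t), w r ≤ n * t) →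
      n * ∫ x in (0 : ℝ)..((∑ r ∈ T, w r) / n), g x ≤ ∑ r ∈ T, w r * g r := by
  classical
  have hint : ∀ u v : ℝ, u ∈ Set.Icc (0:ℝ) 1 → v ∈ Set.Icc (0:ℝ) 1 →
      IntervalIntegrable g MeasureTheory.volume u v := by
    intro u v hu hv
    refine (hcont.mono ?_).intervalIntegrable
    have h01 : Set.uIcc (0:ℝ) 1 = Set.Icc 0 1 := Set.uIcc_of_le zero_le_one
    rw [← h01]
    exact Set.uIcc_subset_uIcc (h01 ▸ hu) (h01 ▸ hv)
  intro T
  induction T using Finset.induction_on_max with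
  | empty => intro w _ _ _; simp
  | insert a s ha ih =>
    intro w hT hw hF
    have hanotin : a ∉ s := fun h => lt_irrefl a (ha a h)
    have ha1 : a ∈ Set.Icc (0:ℝ) 1 := hT a (Finset.mem_insert_self a s)
    have hwa : 0 ≤ w a := hw a (Finset.mem_insert_self a s)
    have hsum : ∑ r ∈ insert a s, w r = w a + ∑ r ∈ s, w r :=
      Finset.sum_insert hanotin
    set b' : ℝ := ∑ r ∈ s, w r with hb'def
    have hb'0 : 0 ≤ b' := Finset.sum_nonneg fun r hr => hw r (Finset.mem_insert_of_mem hr)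
    -- the cumulative bound at `a` gives the total bound
    have hba : w a + b' ≤ n * a := by
      have h1 := hF a (Finset.mem_insert_self a s)
      have h2 : (insert a s).filter (· ≤ a) = insert a s := by
        apply Finset.filter_true_of_mem
        intro x hx
        rcases Finset.mem_insert.mp hx with rfl | hx
        · exact le_refl x
        · exact le_of_lt (ha x hx)
      rw [h2, hsum] at h1
      exact h1
    -- apply induction hypothesis to `s`
    have hIH : n * ∫ x in (0:ℝ)..(b' / n), g x ≤ ∑ r ∈ s, w r * g r := by
      apply ih
      · intro r hr; exact hT r (Finset.mem_insert_of_mem hr)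
      · intro r hr; exact hw r (Finset.mem_insert_of_mem hr)
      · intro t ht
        have h1 := hF t (Finset.mem_insert_of_mem ht)
        have h2 : (insert a s).filter (· ≤ t) = s.filter (· ≤ t) := by
          rw [Finset.filter_insert, if_neg (not_le.mpr (ha t ht))]
        rw [h2] at h1
        exact h1
    set c : ℝ := b' / n with hcdef
    set d : ℝ := (w a + b') / n with hddef
    have hcd : c ≤ d := by
      rw [hcdef, hddef, div_le_div_iff_of_pos_right hn]
      linarith
    have hc0 : 0 ≤ c := div_nonneg hb'0 hn.le
    have hda : d ≤ a := by
      rw [hddef, div_le_iff₀ hn]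
      linarith [hba]
    have hd1 : d ≤ 1 := hda.trans ha1.2
    have hcIcc : c ∈ Set.Icc (0:ℝ) 1 := ⟨hc0, hcd.trans hd1⟩
    have hdIcc : d ∈ Set.Icc (0:ℝ) 1 := ⟨hc0.trans hcd, hd1⟩
    have h0Icc : (0:ℝ) ∈ Set.Icc (0:ℝ) 1 := ⟨le_refl 0, zero_le_one⟩
    have hsplit : (∫ x in (0:ℝ)..c, g x) + (∫ x in c..d, g x) = ∫ x in (0:ℝ)..d, g x :=
      intervalIntegral.integral_add_adjacent_intervals (hint 0 c h0Icc hcIcc)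
        (hint c d hcIcc hdIcc)
    have hbound : (∫ x in c..d, g x) ≤ (d - c) * g a := by
      have h1 : (∫ x in c..d, g x) ≤ ∫ _x in c..d, g a := by
        apply intervalIntegral.integral_mono_on hcd (hint c d hcIcc hdIcc)
          intervalIntegrable_const
        intro x hx
        have hx1 : x ∈ Set.Icc (0:ℝ) 1 := ⟨hc0.trans hx.1, (hx.2.trans hd1)⟩
        exact hmono hx1 ha1 (hx.2.trans hda)
      simpa using h1
    have hdc : d - c = w a / n := by
      rw [hddef, hcdef]; ring
    have hstep : n * ∫ x in c..d, g x ≤ w a * g a := by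
      calc n * ∫ x in c..d, g x ≤ n * ((d - c) * g a) := by
            apply mul_le_mul_of_nonneg_left hbound hn.le
      _ = w a * g a := by rw [hdc]; field_simp
    rw [hsum, Finset.sum_insert hanotin]
    have : n * ∫ x in (0:ℝ)..((w a + b') / n), g x
        = n * (∫ x in (0:ℝ)..c, g x) + n * (∫ x in c..d, g x) := by
      rw [← hsplit]; ring
    rw [this]
    linarith [hIH, hstep]

/-- Let `Δ` be a probability distribution over a finite set of committees, each voter `v`
having a strict linear order over committees, `rank_v(S) = Pr_{S'~Δ}[S ⪰_v S']`, and for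
each committee `S` let `U_S` be a set of `αn` voters with the smallest values of
`rank_v(S)`. If `g : [0,1] → ℝ≥0` is non-decreasing, non-constant, and continuous, then
`E_{S~Δ}[(1/n)·Σ_{v∈U_S} g(rank_v(S))] ≥ ∫_0^α g(x) dx`, where `α = a/n`. -/
theorem stmt18 (V 𝒮 : Type*) [Fintype V] [Fintype 𝒮] [Nonempty V]
    (Δ : 𝒮 → ℝ) (hΔ0 : ∀ S, 0 ≤ Δ S) (hΔ1 : (∑ S : 𝒮, Δ S) = 1)
    (pref : V → 𝒮 → 𝒮 → Prop) [∀ v, DecidableRel (pref v)]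
    (hlin : ∀ v, IsStrictTotalOrder 𝒮 (pref v))
    (a : ℕ) (ha0 : 0 < a) (han : a ≤ Fintype.card V)
    (U : 𝒮 → Finset V) (hUcard : ∀ S, (U S).card = a)
    (hUmin : ∀ S, ∀ v ∈ U S, ∀ u : V, u ∉ U S →
      committeeRank Δ pref v S ≤ committeeRank Δ pref u S)
    (g : ℝ → ℝ) (hmono : MonotoneOn g (Set.Icc 0 1))
    (hcont : ContinuousOn g (Set.Icc 0 1))
    (hnonneg : ∀ x ∈ Set.Icc (0 : ℝ) 1, 0 ≤ g x)
    (hnonconst : ∃ x ∈ Set.Icc (0 : ℝ) 1, ∃ y ∈ Set.Icc (0 : ℝ) 1, g x ≠ g y) :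
    (∫ x in (0 : ℝ)..((a : ℝ) / (Fintype.card V : ℝ)), g x) ≤
      ∑ S : 𝒮, Δ S *
        ((∑ v ∈ U S, g (committeeRank Δ pref v S)) / (Fintype.card V : ℝ)) := by
  classical
  set n : ℝ := (Fintype.card V : ℝ) with hndef
  have hn : (0:ℝ) < n := by
    have := Fintype.card_pos (α := V)
    rw [hndef]; exact_mod_cast this
  set rk : 𝒮 × V → ℝ := fun p => committeeRank Δ pref p.2 p.1 with hrkdef
  set P : Finset (𝒮 × V) := Finset.univ.filter (fun p => p.2 ∈ U p.1) with hPdef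
  set T : Finset ℝ := P.image rk with hTdef
  set w : ℝ → ℝ := fun r => ∑ p ∈ P.filter (fun p => rk p = r), Δ p.1 with hwdef
  have hPmem : ∀ p : 𝒮 × V, p ∈ P ↔ p.1 ∈ (Finset.univ : Finset 𝒮) ∧ p.2 ∈ U p.1 := by
    intro p; simp [hPdef]
  have hrank01 : ∀ v S, committeeRank Δ pref v S ∈ Set.Icc (0:ℝ) 1 :=
    fun v S => rank_mem_Icc Δ hΔ0 hΔ1 pref v S
  have hT01 : ∀ r ∈ T, r ∈ Set.Icc (0:ℝ) 1 := by
    intro r hr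
    obtain ⟨p, _, rfl⟩ := Finset.mem_image.mp hr
    exact hrank01 p.2 p.1
  have hw0 : ∀ r ∈ T, 0 ≤ w r := by
    intro r _
    exact Finset.sum_nonneg fun p _ => hΔ0 p.1
  -- total weight equals `a`
  have hsumw : ∑ r ∈ T, w r = (a : ℝ) := by
    have h1 : ∑ r ∈ T, w r = ∑ p ∈ P, Δ p.1 := by
      rw [hwdef]
      exact Finset.sum_fiberwise_of_maps_to (fun p hp => Finset.mem_image_of_mem rk hp) _
    rw [h1, Finset.sum_finset_product P Finset.univ (fun S => U S) hPmem]
    simp only [Finset.sum_const, hUcard, nsmul_eq_mul]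
    rw [← Finset.mul_sum, hΔ1, mul_one]
  -- cumulative weight bound
  have hF : ∀ t ∈ T, ∑ r ∈ T.filter (· ≤ t), w r ≤ n * t := by
    intro t ht
    have ht0 : 0 ≤ t := (hT01 t ht).1
    have h1 : ∑ r ∈ T.filter (· ≤ t), w r = ∑ p ∈ P.filter (fun p => rk p ≤ t), Δ p.1 := by
      rw [eq_comm]
      have := Finset.sum_fiberwise_of_maps_to
        (g := rk) (s := P.filter (fun p => rk p ≤ t)) (t := T.filter (· ≤ t))
        (f := fun p => Δ p.1) ?_
      · rw [← this]
        apply Finset.sum_congr rfl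
        intro r hr
        have hrt : r ≤ t := (Finset.mem_filter.mp hr).2
        rw [hwdef]
        apply Finset.sum_congr ?_ (fun _ _ => rfl)
        rw [Finset.filter_filter]
        apply Finset.filter_congr
        intro p _
        constructor
        · rintro ⟨_, h⟩; exact h
        · intro h; exact ⟨le_of_eq_of_le h hrt, h⟩
      · intro p hp
        rw [Finset.mem_filter] at hp ⊢
        exact ⟨Finset.mem_image_of_mem rk hp.1, hp.2⟩
    rw [h1]
    have h2 : ∑ p ∈ P.filter (fun p => rk p ≤ t), Δ p.1
        ≤ ∑ p ∈ Finset.univ.filter (fun p : 𝒮 × V => rk p ≤ t), Δ p.1 := by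
      apply Finset.sum_le_sum_of_subset_of_nonneg
      · intro p hp
        rw [Finset.mem_filter] at hp ⊢
        exact ⟨Finset.mem_univ p, hp.2⟩
      · intro p _ _; exact hΔ0 p.1
    have h3 : ∑ p ∈ Finset.univ.filter (fun p : 𝒮 × V => rk p ≤ t), Δ p.1
        = ∑ v : V, ∑ S ∈ Finset.univ.filter (fun S => committeeRank Δ pref v S ≤ t), Δ S := by
      apply Finset.sum_finset_product_right
      intro p
      simp [hrkdef]
    have h4 : ∑ v : V, ∑ S ∈ Finset.univ.filter (fun S => committeeRank Δ pref v S ≤ t), Δ S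
        ≤ ∑ _v : V, t :=
      Finset.sum_le_sum fun v _ => sum_rank_le Δ hΔ0 pref hlin v t ht0
    have h5 : ∑ _v : V, t = n * t := by
      rw [Finset.sum_const, nsmul_eq_mul, hndef, Finset.card_univ]
    linarith [h2, h3 ▸ h2, h4, h5 ▸ h4]
  -- apply the key lemma
  have hkey := key_lemma g hmono hcont n hn T w hT01 hw0 hF
  rw [hsumw] at hkey
  -- rewrite the weighted sum as the double sum
  have hws : ∑ r ∈ T, w r * g r
      = ∑ S : 𝒮, Δ S * ∑ v ∈ U S, g (committeeRank Δ pref v S) := by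
    have h1 : ∑ r ∈ T, w r * g r = ∑ p ∈ P, Δ p.1 * g (rk p) := by
      rw [eq_comm]
      have := Finset.sum_fiberwise_of_maps_to
        (g := rk) (s := P) (t := T) (f := fun p => Δ p.1 * g (rk p))
        (fun p hp => Finset.mem_image_of_mem rk hp)
      rw [← this]
      apply Finset.sum_congr rfl
      intro r _
      rw [hwdef, Finset.sum_mul]
      apply Finset.sum_congr rfl
      intro p hp
      have : rk p = r := (Finset.mem_filter.mp hp).2
      rw [this]
    rw [h1, Finset.sum_finset_product P Finset.univ (fun S => U S) hPmem]
    apply Finset.sum_congr rfl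
    intro S _
    rw [Finset.mul_sum]
  rw [hws] at hkey
  -- conclude
  have hRHS : ∑ S : 𝒮, Δ S * ((∑ v ∈ U S, g (committeeRank Δ pref v S)) / n)
      = (∑ S : 𝒮, Δ S * ∑ v ∈ U S, g (committeeRank Δ pref v S)) / n := by
    rw [Finset.sum_div]
    apply Finset.sum_congr rfl
    intro S _
    rw [mul_div_assoc]
  rw [hndef] at hRHS
  rw [hRHS, le_div_iff₀ hn]
  linarith [hkey]
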